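/- Let M₁, M₂ be positive semidefinite symmetric p×p matrices and m ∈ [0,1]. Then the operator norm satisfies ‖M₁^m M₂^m‖ ≤ ‖M₁M₂‖^m (Cordes inequality). -/

import Mathlib

set_option maxHeartbeats 1000000



open Matrix
open scoped Matrix.Norms.L2Operator

/-- The m-th power of a Hermitian matrix, defined via its spectral decomposition. -/
noncomputable def herPow {p : ℕ} (M : Matrix (Fin p) (Fin p) ℝ) (hM : M.IsHermitian) (m : ℝ) :
    Matrix (Fin p) (Fin p) ℝ :=
  (hM.eigenvectorUnitary : Matrix (Fin p) (Fin p) ℝ) *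
    Matrix.diagonal (fun i => hM.eigenvalues i ^ m) *
    star (hM.eigenvectorUnitary : Matrix (Fin p) (Fin p) ℝ)

/-- The operator (spectral) norm of a square real matrix. -/
noncomputable def opNorm {p : ℕ} (M : Matrix (Fin p) (Fin p) ℝ) : ℝ :=
  ‖Matrix.toEuclideanCLM (𝕜 := ℝ) M‖


variable {p : ℕ} {M : Matrix (Fin p) (Fin p) ℝ}

lemma opNorm_eq (M : Matrix (Fin p) (Fin p) ℝ) : opNorm M = ‖M‖ := rfl

lemma herPow_isHermitian (hM : M.IsHermitian) (m : ℝ) : (herPow M hM m).IsHermitian := by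
  have := isHermitian_mul_mul_conjTranspose
    (hM.eigenvectorUnitary : Matrix (Fin p) (Fin p) ℝ)
    (isHermitian_diagonal (fun i => hM.eigenvalues i ^ m))
  simpa [herPow, Matrix.star_eq_conjTranspose] using this

lemma herPow_posSemidef (hM : M.PosSemidef) (m : ℝ) : (herPow M hM.1 m).PosSemidef := by
  have hD : (Matrix.diagonal fun i => hM.1.eigenvalues i ^ m).PosSemidef :=
    Matrix.PosSemidef.diagonal fun i => Real.rpow_nonneg (hM.eigenvalues_nonneg i) m
  have := hD.mul_mul_conjTranspose_same (hM.1.eigenvectorUnitary : Matrix (Fin p) (Fin p) ℝ)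
  simpa [herPow, Matrix.star_eq_conjTranspose] using this

lemma herPow_zero (hM : M.IsHermitian) : herPow M hM 0 = 1 := by
  simp [herPow, Real.rpow_zero, Matrix.diagonal_one,
    (Matrix.mem_unitaryGroup_iff).mp hM.eigenvectorUnitary.2]

lemma herPow_one (hM : M.IsHermitian) : herPow M hM 1 = M := by
  conv_rhs => rw [hM.spectral_theorem]
  simp [herPow, RCLike.ofReal_real_eq_id, Function.comp]

lemma herPow_mul (hM : M.PosSemidef) {s t : ℝ} (hs : 0 ≤ s) (ht : 0 ≤ t) :
    herPow M hM.1 s * herPow M hM.1 t = herPow M hM.1 (s + t) := by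
  unfold herPow
  set U := (hM.1.eigenvectorUnitary : Matrix (Fin p) (Fin p) ℝ)
  have hU : star U * U = 1 := (Matrix.mem_unitaryGroup_iff').mp hM.1.eigenvectorUnitary.2
  calc U * diagonal (fun i => hM.1.eigenvalues i ^ s) * star U *
        (U * diagonal (fun i => hM.1.eigenvalues i ^ t) * star U)
      = U * (diagonal (fun i => hM.1.eigenvalues i ^ s) * (star U * U) *
          diagonal (fun i => hM.1.eigenvalues i ^ t)) * star U := by
        simp only [Matrix.mul_assoc]
    _ = U * diagonal (fun i => hM.1.eigenvalues i ^ (s + t)) * star U := by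
        rw [hU, Matrix.mul_one, Matrix.diagonal_mul_diagonal]
        have h : (fun i => hM.1.eigenvalues i ^ s * hM.1.eigenvalues i ^ t)
            = fun i => hM.1.eigenvalues i ^ (s + t) :=
          funext fun i => (Real.rpow_add_of_nonneg (hM.eigenvalues_nonneg i) hs ht).symm
        rw [h]

lemma norm_one_le_one : ‖(1 : Matrix (Fin p) (Fin p) ℝ)‖ ≤ 1 := by
  rw [Matrix.cstar_norm_def, _root_.map_one]
  exact ContinuousLinearMap.norm_id_le

lemma norm_unitary_le {U : Matrix (Fin p) (Fin p) ℝ} (hU : U ∈ Matrix.unitaryGroup (Fin p) ℝ) :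
    ‖U‖ ≤ 1 := by
  have h1 : Uᴴ * U = 1 := by
    rw [← Matrix.star_eq_conjTranspose]
    exact (Matrix.mem_unitaryGroup_iff').mp hU
  have h2 : ‖Uᴴ * U‖ = ‖U‖ * ‖U‖ := Matrix.l2_opNorm_conjTranspose_mul_self U
  rw [h1] at h2
  nlinarith [norm_one_le_one (p := p), norm_nonneg U]

lemma norm_diagonal_le {d : Fin p → ℝ} {c : ℝ} (hc : 0 ≤ c) (h : ∀ i, |d i| ≤ c) :
    ‖(Matrix.diagonal d : Matrix (Fin p) (Fin p) ℝ)‖ ≤ c := by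
  rw [Matrix.cstar_norm_def]
  refine ContinuousLinearMap.opNorm_le_bound _ hc (fun x => ?_)
  obtain ⟨y, rfl⟩ : ∃ y : Fin p → ℝ, (WithLp.equiv 2 _).symm y = x :=
    ⟨WithLp.equiv 2 _ x, (WithLp.equiv 2 _).symm_apply_apply x⟩
  rw [WithLp.equiv_symm_apply, Matrix.toEuclideanCLM_toLp]
  rw [EuclideanSpace.norm_eq, EuclideanSpace.norm_eq]
  simp only [PiLp.toLp_apply, Matrix.toLin'_apply, Matrix.mulVec_diagonal]
  rw [← Real.sqrt_sq hc, ← Real.sqrt_mul (by positivity)]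
  apply Real.sqrt_le_sqrt
  rw [Finset.mul_sum]
  apply Finset.sum_le_sum
  intro i _
  have h1 : ‖d i * y i‖ ^ 2 = (d i)^2 * ‖y i‖^2 := by
    rw [norm_mul, mul_pow]
    simp [Real.norm_eq_abs, sq_abs]
  rw [h1]
  have : (d i)^2 ≤ c^2 := by nlinarith [h i, abs_nonneg (d i), le_abs_self (d i), neg_abs_le (d i)]
  nlinarith [sq_nonneg (‖y i‖)]

lemma norm_hermitian_le {P : Matrix (Fin p) (Fin p) ℝ} (hP : P.IsHermitian) {c : ℝ}
    (hc : 0 ≤ c) (h : ∀ i, |hP.eigenvalues i| ≤ c) : ‖P‖ ≤ c := by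
  conv_lhs => rw [hP.spectral_theorem]
  set U := (hP.eigenvectorUnitary : Matrix (Fin p) (Fin p) ℝ) with hUdef
  have hU : ‖U‖ ≤ 1 := norm_unitary_le hP.eigenvectorUnitary.2
  have hUs : ‖star U‖ ≤ 1 := by
    rw [Matrix.star_eq_conjTranspose, Matrix.l2_opNorm_conjTranspose]; exact hU
  have hD : ‖(Matrix.diagonal (RCLike.ofReal ∘ hP.eigenvalues) : Matrix (Fin p) (Fin p) ℝ)‖ ≤ c := by
    rw [RCLike.ofReal_real_eq_id]
    exact norm_diagonal_le hc h
  calc ‖U * Matrix.diagonal (RCLike.ofReal ∘ hP.eigenvalues) * star U‖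
      ≤ ‖U * Matrix.diagonal (RCLike.ofReal ∘ hP.eigenvalues)‖ * ‖star U‖ :=
        Matrix.l2_opNorm_mul _ _
    _ ≤ (‖U‖ * ‖Matrix.diagonal (RCLike.ofReal ∘ hP.eigenvalues)‖) * ‖star U‖ := by
        apply mul_le_mul_of_nonneg_right (Matrix.l2_opNorm_mul _ _) (norm_nonneg _)
    _ ≤ (1 * c) * 1 := by
        apply mul_le_mul _ hUs (norm_nonneg _) (by positivity)
        exact mul_le_mul hU hD (norm_nonneg _) zero_le_one
    _ = c := by ring

lemma exists_eigenvector {Q : Matrix (Fin p) (Fin p) ℝ} {μ : ℝ} (h : μ ∈ spectrum ℝ Q) :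
    ∃ v : Fin p → ℝ, v ≠ 0 ∧ Q *ᵥ v = μ • v := by
  have h' : μ ∈ spectrum ℝ (Matrix.toLin' Q) := by
    rwa [← AlgEquiv.spectrum_eq Matrix.toLinAlgEquiv' Q] at h
  have he : Module.End.HasEigenvalue (Matrix.toLin' Q) μ :=
    Module.End.HasEigenvalue.of_mem_spectrum h'
  obtain ⟨v, hv⟩ := Module.End.HasEigenvalue.exists_hasEigenvector he
  exact ⟨v, hv.2, by simpa [Matrix.toLin'_apply] using hv.apply_eq_smul⟩

lemma abs_eigenvalue_le_norm {Q : Matrix (Fin p) (Fin p) ℝ} {μ : ℝ} {v : Fin p → ℝ}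
    (hv : v ≠ 0) (h : Q *ᵥ v = μ • v) : |μ| ≤ ‖Q‖ := by
  set x : EuclideanSpace ℝ (Fin p) := (WithLp.equiv 2 _).symm v with hxdef
  have hineq := Matrix.l2_opNorm_mulVec Q x
  have hx : ‖x‖ ≠ 0 := by
    simp only [hxdef, ne_eq, norm_eq_zero]
    intro hcon
    exact hv (by simpa using congrArg (WithLp.equiv 2 (Fin p → ℝ)) hcon)
  have hQx : Q *ᵥ (x : Fin p → ℝ) = μ • v := by
    rw [hxdef]; simpa using h
  rw [hQx] at hineq
  have : ‖(EuclideanSpace.equiv (Fin p) ℝ).symm (μ • v)‖ = |μ| * ‖x‖ := by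
    have : (EuclideanSpace.equiv (Fin p) ℝ).symm (μ • v) = μ • x := by
      simp [hxdef, EuclideanSpace.equiv]
    rw [this, norm_smul, Real.norm_eq_abs]
  rw [this] at hineq
  exact le_of_mul_le_mul_right hineq (lt_of_le_of_ne (norm_nonneg x) (Ne.symm hx))

lemma spec_swap {X Y : Matrix (Fin p) (Fin p) ℝ} {μ : ℝ} (h : μ ∈ spectrum ℝ (X * Y))
    (hμ : μ ≠ 0) : μ ∈ spectrum ℝ (Y * X) := by
  have : μ ∈ spectrum ℝ (X * Y) \ {0} := ⟨h, hμ⟩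
  rw [spectrum.nonzero_mul_comm] at this
  exact this.1

lemma midpoint_step (hp : p ≠ 0) {M₁ M₂ : Matrix (Fin p) (Fin p) ℝ}
    (h₁ : M₁.PosSemidef) (h₂ : M₂.PosSemidef) {s t : ℝ} (hs : 0 ≤ s) (ht : 0 ≤ t)
    (Hs : ‖herPow M₁ h₁.1 s * herPow M₂ h₂.1 s‖ ≤ ‖M₁ * M₂‖ ^ s)
    (Ht : ‖herPow M₁ h₁.1 t * herPow M₂ h₂.1 t‖ ≤ ‖M₁ * M₂‖ ^ t) :
    ‖herPow M₁ h₁.1 ((s+t)/2) * herPow M₂ h₂.1 ((s+t)/2)‖ ≤ ‖M₁ * M₂‖ ^ ((s+t)/2) := by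
  have : Nonempty (Fin p) := ⟨⟨0, Nat.pos_of_ne_zero hp⟩⟩
  set c := ‖M₁ * M₂‖ with hc
  have hc0 : 0 ≤ c := norm_nonneg _
  set u := (s+t)/2 with hu
  have hu0 : 0 ≤ u := by positivity
  set A := fun r => herPow M₁ h₁.1 r with hA
  set B := fun r => herPow M₂ h₂.1 r with hB
  set X := A u * B u with hX
  have hAh : ∀ r, (A r)ᴴ = A r := fun r => (herPow_isHermitian h₁.1 r).eq
  have hBh : ∀ r, (B r)ᴴ = B r := fun r => (herPow_isHermitian h₂.1 r).eq
  have huu : u + u = s + t := by rw [hu]; ring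
  have e1 : Xᴴ * X = B u * (A (s+t) * B u) := by
    rw [hX, conjTranspose_mul, hAh, hBh]
    calc (B u * A u) * (A u * B u) = B u * ((A u * A u) * B u) := by
          simp only [Matrix.mul_assoc]
      _ = B u * (A (s+t) * B u) := by
          rw [hA]
          rw [herPow_mul h₁ hu0 hu0, huu]
  have hPsd : (Xᴴ * X).PosSemidef := Matrix.posSemidef_conjTranspose_mul_self X
  obtain ⟨i₀, hi₀⟩ := Finite.exists_max hPsd.1.eigenvalues
  set μ := hPsd.1.eigenvalues i₀ with hμ
  have hμ0 : 0 ≤ μ := hPsd.eigenvalues_nonneg i₀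
  have hXX : ‖Xᴴ * X‖ ≤ μ := norm_hermitian_le hPsd.1 hμ0
    (fun i => by rw [abs_of_nonneg (hPsd.eigenvalues_nonneg i)]; exact hi₀ i)
  have hXn : ‖X‖ * ‖X‖ ≤ μ := by
    rw [← Matrix.l2_opNorm_conjTranspose_mul_self]; exact hXX
  have hgoal2 : ‖X‖ * ‖X‖ ≤ c ^ (s+t) := by
    rcases eq_or_ne μ 0 with hμz | hμz
    · calc ‖X‖*‖X‖ ≤ μ := hXn
        _ = 0 := hμz
        _ ≤ _ := Real.rpow_nonneg hc0 _
    · have m1 : μ ∈ spectrum ℝ (Xᴴ * X) := hPsd.1.eigenvalues_mem_spectrum_real i₀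
      rw [e1] at m1
      have m2 := spec_swap m1 hμz
      have eA : A (s+t) = A s * A t := (herPow_mul h₁ hs ht).symm
      have eB : herPow M₂ h₂.1 (s+t) = B t * B s := by
        rw [show s+t = t+s by ring]; exact (herPow_mul h₂ ht hs).symm
      have e2 : (A (s+t) * B u) * B u = A s * ((A t * B t) * B s) := by
        rw [Matrix.mul_assoc, hB]
        rw [herPow_mul h₂ hu0 hu0, huu, ← hB, eA, eB]
        simp only [Matrix.mul_assoc]
      rw [e2] at m2
      have m3 := spec_swap m2 hμz
      have e3 : ((A t * B t) * B s) * A s = (A t * B t) * (B s * A s) := by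
        simp only [Matrix.mul_assoc]
      rw [e3] at m3
      obtain ⟨v, hv0, hvec⟩ := exists_eigenvector m3
      have hb1 : |μ| ≤ ‖(A t * B t) * (B s * A s)‖ := abs_eigenvalue_le_norm hv0 hvec
      have hb2 : ‖(A t * B t) * (B s * A s)‖ ≤ ‖A t * B t‖ * ‖B s * A s‖ :=
        Matrix.l2_opNorm_mul _ _
      have hb3 : ‖B s * A s‖ = ‖A s * B s‖ := by
        rw [← Matrix.l2_opNorm_conjTranspose (A s * B s), conjTranspose_mul, hAh, hBh]
      have hb4 : ‖A t * B t‖ * ‖B s * A s‖ ≤ c ^ t * c ^ s := by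
        rw [hb3]; exact mul_le_mul Ht Hs (norm_nonneg _) (Real.rpow_nonneg hc0 t)
      have hct : c ^ t * c ^ s = c ^ (s+t) := by
        rw [show s+t = t+s by ring]; exact (Real.rpow_add_of_nonneg hc0 ht hs).symm
      calc ‖X‖*‖X‖ ≤ μ := hXn
        _ ≤ |μ| := le_abs_self μ
        _ ≤ ‖(A t * B t) * (B s * A s)‖ := hb1
        _ ≤ ‖A t * B t‖ * ‖B s * A s‖ := hb2
        _ ≤ c^t*c^s := hb4
        _ = c^(s+t) := hct
  have hcu : c ^ u * c ^ u = c ^ (s+t) := by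
    rw [← Real.rpow_add_of_nonneg hc0 hu0 hu0, huu]
  show ‖X‖ ≤ c ^ u
  nlinarith [norm_nonneg X, Real.rpow_nonneg hc0 u]

lemma dyadic_bound (hp : p ≠ 0) {M₁ M₂ : Matrix (Fin p) (Fin p) ℝ}
    (h₁ : M₁.PosSemidef) (h₂ : M₂.PosSemidef) :
    ∀ n k : ℕ, k ≤ 2^n →
      ‖herPow M₁ h₁.1 ((k:ℝ)/2^n) * herPow M₂ h₂.1 ((k:ℝ)/2^n)‖ ≤
        ‖M₁ * M₂‖ ^ ((k:ℝ)/2^n) := by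
  intro n
  induction n with
  | zero =>
    intro k hk
    norm_num at hk
    interval_cases k
    · simp only [Nat.cast_zero, pow_zero, zero_div, Real.rpow_zero]
      rw [herPow_zero, herPow_zero, one_mul]
      exact norm_one_le_one
    · simp only [Nat.cast_one, pow_zero, div_one, Real.rpow_one]
      rw [herPow_one, herPow_one]
  | succ n ih =>
    intro k hk
    have h2n : (2:ℕ)^(n+1) = 2*2^n := by ring
    set a := k/2 with hadef
    set b := k - k/2 with hbdef
    have ha : a ≤ 2^n := by omega
    have hb : b ≤ 2^n := by omega
    have hab : a + b = k := by omega
    have key := midpoint_step hp h₁ h₂ (s := (a:ℝ)/2^n) (t := (b:ℝ)/2^n)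
      (by positivity) (by positivity) (ih a ha) (ih b hb)
    have hcast : ((a:ℝ) + (b:ℝ)) = (k:ℝ) := by exact_mod_cast congrArg (Nat.cast : ℕ → ℝ) hab
    have hexp : ((a:ℝ)/2^n + (b:ℝ)/2^n)/2 = (k:ℝ)/2^(n+1) := by
      rw [← hcast, ← add_div, div_div, ← pow_succ]
    rw [hexp] at key
    exact key


/-- Cordes inequality: for positive semidefinite symmetric M₁, M₂ and m ∈ [0,1],
`‖M₁^m M₂^m‖ ≤ ‖M₁M₂‖^m`. -/
theorem stmt2 (p : ℕ) (M₁ M₂ : Matrix (Fin p) (Fin p) ℝ)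
    (h₁ : M₁.PosSemidef) (h₂ : M₂.PosSemidef) (m : ℝ) (hm : m ∈ Set.Icc (0 : ℝ) 1) :
    opNorm (herPow M₁ h₁.1 m * herPow M₂ h₂.1 m) ≤ opNorm (M₁ * M₂) ^ m := by

  obtain ⟨hm0, hm1⟩ := hm
  rcases eq_or_ne p 0 with hp | hp
  · subst hp
    have hz0 : (herPow M₁ h₁.1 m * herPow M₂ h₂.1 m) = 0 := by
      ext i j; exact i.elim0
    rw [opNorm_eq, hz0, norm_zero]
    exact Real.rpow_nonneg (norm_nonneg (M₁ * M₂)) m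
  · rw [opNorm_eq, opNorm_eq]
    rcases eq_or_lt_of_le hm0 with hm0' | hm0'
    · rw [← hm0', herPow_zero, herPow_zero, one_mul, Real.rpow_zero]
      exact norm_one_le_one
    · set c := ‖M₁ * M₂‖ with hcdef
      set d : ℕ → ℝ := fun n => (⌈m * 2^n⌉₊ : ℝ)/2^n with hd
      have hk_le : ∀ n : ℕ, ⌈m * 2^n⌉₊ ≤ 2^n := by
        intro n
        apply Nat.ceil_le.mpr
        push_cast
        nlinarith [pow_pos (by norm_num : (0:ℝ) < 2) n]
      have hbound : ∀ n, ‖herPow M₁ h₁.1 (d n) * herPow M₂ h₂.1 (d n)‖ ≤ c ^ (d n) := by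
        intro n
        exact dyadic_bound hp h₁ h₂ n (⌈m * 2^n⌉₊) (hk_le n)
      have hd_ge : ∀ n, m ≤ d n := by
        intro n
        rw [hd, le_div_iff₀ (by positivity)]
        exact Nat.le_ceil _
      have hd_le : ∀ n, d n ≤ m + (1/2)^n := by
        intro n
        rw [hd, div_le_iff₀ (by positivity)]
        have h2 : ((1:ℝ)/2)^n * 2^n = 1 := by
          rw [div_pow, one_pow, div_mul_cancel₀]
          exact (pow_pos (by norm_num : (0:ℝ) < 2) n).ne'
        calc (⌈m * 2^n⌉₊ : ℝ) ≤ m * 2^n + 1 :=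
              (Nat.ceil_lt_add_one (by positivity)).le
          _ = (m + (1/2)^n) * 2^n := by rw [add_mul, h2]
      have hdm : Filter.Tendsto d Filter.atTop (nhds m) := by
        have h1 : Filter.Tendsto (fun n : ℕ => m + (1/2:ℝ)^n) Filter.atTop (nhds (m+0)) :=
          tendsto_const_nhds.add (tendsto_pow_atTop_nhds_zero_of_lt_one (by norm_num) (by norm_num))
        rw [add_zero] at h1
        exact tendsto_of_tendsto_of_tendsto_of_le_of_le tendsto_const_nhds h1 hd_ge hd_le
      have hdiag : ∀ v w : Fin p → ℝ,
          Matrix.diagonal (v + w) = Matrix.diagonal v + Matrix.diagonal w := fun v w =>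
        (Matrix.diagonal_add v w).symm
      have hcont : ∀ (M : Matrix (Fin p) (Fin p) ℝ) (hM : M.IsHermitian),
          Filter.Tendsto (fun n => herPow M hM (d n)) Filter.atTop (nhds (herPow M hM m)) := by
        intro M hM
        let T : (Fin p → ℝ) →ₗ[ℝ] Matrix (Fin p) (Fin p) ℝ := {
          toFun := fun v => (hM.eigenvectorUnitary : Matrix (Fin p) (Fin p) ℝ) *
            Matrix.diagonal v * star (hM.eigenvectorUnitary : Matrix (Fin p) (Fin p) ℝ)
          map_add' := fun v w => by
            simp only [hdiag, Matrix.mul_add, Matrix.add_mul]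
          map_smul' := fun r v => by
            simp [Matrix.diagonal_smul, Matrix.mul_smul, Matrix.smul_mul] }
        have hT : Continuous T := T.continuous_of_finiteDimensional
        have hvt : Filter.Tendsto (fun n => (fun i => hM.eigenvalues i ^ d n))
            Filter.atTop (nhds (fun i => hM.eigenvalues i ^ m)) := by
          rw [tendsto_pi_nhds]
          intro i
          exact Filter.Tendsto.comp (Real.continuousAt_const_rpow' hm0'.ne') hdm
        exact Filter.Tendsto.comp (hT.tendsto _) hvt
      have hL : Filter.Tendsto (fun n => ‖herPow M₁ h₁.1 (d n) * herPow M₂ h₂.1 (d n)‖)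
          Filter.atTop (nhds ‖herPow M₁ h₁.1 m * herPow M₂ h₂.1 m‖) :=
        ((hcont M₁ h₁.1).mul (hcont M₂ h₂.1)).norm
      have hR : Filter.Tendsto (fun n => c ^ (d n)) Filter.atTop (nhds (c ^ m)) :=
        Filter.Tendsto.comp (Real.continuousAt_const_rpow' hm0'.ne') hdm
      exact le_of_tendsto_of_tendsto' hL hR hbound
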